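/- Let μ ≤ λ be infinite cardinals with μ regular, and suppose λ is not the successor of a cardinal of cofinality less than μ and there is an unbounded set of almost μ-closed cardinals below λ. Then for every θ < λ we have θ^{<μ} < λ. -/
import Mathlib


open Cardinal

universe u

lemma pow_le_of_lt_cof {c κ : Cardinal.{u}} (hc : ℵ₀ ≤ c) (hκ : κ < c.ord.cof)
    (h : ∀ σ < c, σ ^ κ ≤ c) : c ^ κ ≤ c := by
  have hα : #c.ord.ToType = c := mk_ord_toType c
  have hκo : #(Quotient.out κ) = κ := mk_out κ
  let tyi : c.ord.ToType → Ordinal.{u} := fun x => @Ordinal.typein.{u} c.ord.ToType (· < ·) isWellOrder_lt x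
  have key : ∀ f : Quotient.out κ → c.ord.ToType, ∃ b : c.ord.ToType, ∀ i, f i < b := by
    intro f
    have h1 : Ordinal.lsub.{u, u} (fun i => tyi (f i)) < c.ord := by
      apply Ordinal.lsub_lt_ord
      · rwa [hκo]
      · intro i
        simpa [tyi] using Ordinal.typein_lt_self (f i)
    rw [← Ordinal.type_toType c.ord] at h1
    obtain ⟨b, hb⟩ := @Ordinal.typein_surj.{u} _ (· < ·) isWellOrder_lt _ h1
    refine ⟨b, fun i => ?_⟩
    have := Ordinal.lt_lsub (fun i => tyi (f i)) i
    rw [← hb] at this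
    exact (@Ordinal.typein_lt_typein _ (· < ·) isWellOrder_lt _ _).1 this
  choose bd hbd using key
  have inj : #(Quotient.out κ → c.ord.ToType) ≤
      #(Σ b : c.ord.ToType, (Quotient.out κ → Set.Iio b)) := by
    refine ⟨⟨fun f => ⟨bd f, fun i => ⟨f i, hbd f i⟩⟩, ?_⟩⟩
    have : Function.LeftInverse
        (fun p : Σ b : c.ord.ToType, (Quotient.out κ → Set.Iio b) => fun i => (p.2 i).val)
        (fun f : Quotient.out κ → c.ord.ToType => (⟨bd f, fun i => ⟨f i, hbd f i⟩⟩ :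
          Σ b : c.ord.ToType, (Quotient.out κ → Set.Iio b))) := fun f => rfl
    exact this.injective
  have hle : #(Σ b : c.ord.ToType, (Quotient.out κ → Set.Iio b)) ≤ c := by
    rw [mk_sigma]
    calc Cardinal.sum (fun b : c.ord.ToType => #(Quotient.out κ → Set.Iio b))
        ≤ Cardinal.sum (fun _ : c.ord.ToType => c) := by
          apply Cardinal.sum_le_sum
          intro b
          rw [← Cardinal.power_def, hκo]
          exact h _ (mk_Iio_ord_toType b)
      _ = #c.ord.ToType * c := by rw [Cardinal.sum_const']
      _ = c := by rw [hα, Cardinal.mul_eq_self hc]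
  have hpd := Cardinal.power_def c.ord.ToType (Quotient.out κ)
  rw [hα, hκo] at hpd
  rw [hpd]
  exact inj.trans hle

/-- A cardinal `ν` is almost `μ`-closed if `σ^{<μ} ≤ ν` for all `σ < ν`. -/
def AlmostMuClosed (μ ν : Cardinal.{u}) : Prop := ∀ σ < ν, σ ^< μ ≤ ν

/-- If `μ ≤ λ` are infinite with `μ` regular, `λ` is not the successor of a cardinal of
cofinality less than `μ`, and there is an unbounded set of almost `μ`-closed cardinals
below `λ`, then `θ^{<μ} < λ` for all `θ < λ`. -/
theorem stmt19 (μ l : Cardinal.{u}) (hμ : μ.IsRegular) (hl : ℵ₀ ≤ l) (hμl : μ ≤ l)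
    (hnsucc : ¬ ∃ l₀ : Cardinal.{u}, l = Order.succ l₀ ∧ l₀.ord.cof < μ)
    (hunb : ∀ θ < l, ∃ ν : Cardinal.{u}, θ ≤ ν ∧ ν < l ∧ AlmostMuClosed μ ν) :
    ∀ θ < l, θ ^< μ < l := by
  intro θ hθ
  obtain ⟨ν, hθν, hνl, hνc⟩ := hunb θ hθ
  rcases lt_or_eq_of_le hθν with hlt | rfl
  · exact lt_of_le_of_lt (hνc θ hlt) hνl
  · -- θ = ν is itself almost μ-closed
    by_cases hcof : θ.ord.cof < μ
    · -- l ≠ succ θ, so succ θ < l; pick a bigger almost μ-closed cardinal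
      have hne : l ≠ Order.succ θ := fun h => hnsucc ⟨θ, h, hcof⟩
      have hsucc : Order.succ θ < l := lt_of_le_of_ne (Order.succ_le_of_lt hνl) (Ne.symm hne)
      obtain ⟨ν', hθν', hν'l, hν'c⟩ := hunb (Order.succ θ) hsucc
      have hlt : θ < ν' := lt_of_lt_of_le (Order.lt_succ θ) hθν'
      exact lt_of_le_of_lt (hν'c θ hlt) hν'l
    · push_neg at hcof
      have hθinf : ℵ₀ ≤ θ := hμ.aleph0_le.trans (hcof.trans (Ordinal.cof_ord_le θ))
      have : θ ^< μ ≤ θ := by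
        apply Cardinal.powerlt_le.2
        intro κ hκ
        apply pow_le_of_lt_cof hθinf (hκ.trans_le hcof)
        intro σ hσ
        exact le_trans (Cardinal.le_powerlt σ hκ) (hνc σ hσ)
      exact lt_of_le_of_lt this hνl
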